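/- Let X be the Cantorval { ∑_{n≥1} x_n/4^n : ∀n, x_n ∈ {0,2,3,5} } and Z = [0, 5/3] \ interior(X). Then the center of distances of Z is {0}. -/

import Mathlib

noncomputable def centerOfDistances (X : Set ℝ) : Set ℝ :=
  {α | 0 ≤ α ∧ ∀ x ∈ X, ∃ y ∈ X, |x - y| = α}

noncomputable def subsums (a : ℕ → ℝ) : Set ℝ :=
  {x | ∃ A : Set ℕ, x = ∑' n : A, a n}

noncomputable def cantorval : Set ℝ :=
  {x | ∃ d : ℕ → ℝ, (∀ n, d n ∈ ({0, 2, 3, 5} : Set ℝ)) ∧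
    x = ∑' n : ℕ, d n / 4 ^ (n + 1)}

set_option linter.unusedVariables false
set_option linter.unreachableTactic false
set_option linter.unusedTactic false

namespace CV


lemma digit_nonneg {t : ℝ} (ht : t ∈ ({0, 2, 3, 5} : Set ℝ)) : 0 ≤ t := by
  rcases ht with h | h | h | h <;> simp_all <;> norm_num

lemma digit_le {t : ℝ} (ht : t ∈ ({0, 2, 3, 5} : Set ℝ)) : t ≤ 5 := by
  rcases ht with h | h | h | h <;> simp_all <;> norm_num

lemma summable_digits (d : ℕ → ℝ) (hd : ∀ n, d n ∈ ({0, 2, 3, 5} : Set ℝ)) :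
    Summable (fun n => d n / 4 ^ (n + 1)) := by
  apply Summable.of_nonneg_of_le (f := fun n => 5 * (1/4 : ℝ) ^ n)
  · intro n
    have := digit_nonneg (hd n)
    positivity
  · intro n
    have h1 := digit_le (hd n)
    have h2 : (0:ℝ) < 4 ^ (n+1) := by positivity
    rw [div_le_iff₀ h2]
    have : (1/4:ℝ)^n * 4^(n+1) = 4 := by
      rw [div_pow, one_pow, pow_succ]
      field_simp
    nlinarith [this]
  · exact (summable_geometric_of_lt_one (by norm_num) (by norm_num)).mul_left 5

lemma tsum_const_digit (c : ℝ) : ∑' n : ℕ, c / 4 ^ (n + 1) = c / 3 := by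
  have h1 : ∀ n : ℕ, c / 4 ^ (n+1) = (c/4) * (1/4:ℝ)^n := by
    intro n; rw [div_pow, one_pow, pow_succ]; ring
  simp_rw [h1]
  rw [tsum_mul_left, tsum_geometric_of_lt_one (by norm_num) (by norm_num)]
  norm_num
  ring

lemma const_mem {c : ℝ} (hc : c ∈ ({0, 2, 3, 5} : Set ℝ)) : c / 3 ∈ cantorval :=
  ⟨fun _ => c, fun _ => hc, (tsum_const_digit c).symm⟩

lemma zero_mem : (0:ℝ) ∈ cantorval := by
  have := const_mem (c := 0) (by simp)
  simpa using this

lemma twothirds_mem : (2/3:ℝ) ∈ cantorval := const_mem (by norm_num [Set.mem_insert_iff])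

lemma mem_nonneg {x : ℝ} (hx : x ∈ cantorval) : 0 ≤ x := by
  obtain ⟨d, hd, rfl⟩ := hx
  exact tsum_nonneg fun n => by
    have := digit_nonneg (hd n); positivity

lemma mem_le {x : ℝ} (hx : x ∈ cantorval) : x ≤ 5/3 := by
  obtain ⟨d, hd, rfl⟩ := hx
  calc ∑' n : ℕ, d n / 4 ^ (n+1) ≤ ∑' n : ℕ, (5:ℝ) / 4 ^ (n+1) := by
        apply Summable.tsum_le_tsum _ (summable_digits d hd)
          (summable_digits (fun _ => 5) (fun _ => by norm_num [Set.mem_insert_iff]))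
        intro n
        have h1 := digit_le (hd n)
        have h2 : (0:ℝ) < 4 ^ (n+1) := by positivity
        exact div_le_div_of_nonneg_right h1 h2.le
    _ = 5/3 := tsum_const_digit 5

lemma prepend {y : ℝ} (hy : y ∈ cantorval) {δ : ℝ} (hδ : δ ∈ ({0, 2, 3, 5} : Set ℝ)) :
    (y + δ) / 4 ∈ cantorval := by
  obtain ⟨d, hd, rfl⟩ := hy
  refine ⟨fun n => Nat.rec δ (fun k _ => d k) n, fun n => by cases n <;> simp [hδ, hd], ?_⟩
  set d' : ℕ → ℝ := fun n => Nat.rec δ (fun k _ => d k) n with hd'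
  have hsum : Summable (fun n => d' n / 4 ^ (n + 1)) :=
    summable_digits d' (fun n => by cases n <;> simp [hd', hδ, hd])
  rw [Summable.tsum_eq_zero_add hsum]
  have h0 : d' 0 = δ := rfl
  have hs : ∀ n : ℕ, d' (n+1) / 4 ^ (n+1+1) = (d n / 4 ^ (n+1)) / 4 := by
    intro n
    show d n / 4 ^ (n+2) = (d n / 4 ^ (n+1)) / 4
    rw [div_div, ← pow_succ]
  simp_rw [hs, h0]
  rw [tsum_div_const]
  ring

lemma unprepend {x : ℝ} (hx : x ∈ cantorval) :
    ∃ δ ∈ ({0, 2, 3, 5} : Set ℝ), ∃ y ∈ cantorval, x = (y + δ) / 4 := by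
  obtain ⟨d, hd, rfl⟩ := hx
  refine ⟨d 0, hd 0, ∑' n : ℕ, d (n+1) / 4 ^ (n+1), ⟨fun n => d (n+1), fun n => hd _, rfl⟩, ?_⟩
  rw [Summable.tsum_eq_zero_add (summable_digits d hd)]
  have hs : ∀ n : ℕ, d (n+1) / 4 ^ (n+1+1) = (d (n+1) / 4 ^ (n+1)) / 4 := by
    intro n; rw [div_div, ← pow_succ]
  simp_rw [hs]
  rw [tsum_div_const]
  ring

lemma symm_mem {x : ℝ} (hx : x ∈ cantorval) : 5/3 - x ∈ cantorval := by
  obtain ⟨d, hd, rfl⟩ := hx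
  refine ⟨fun n => 5 - d n, fun n => ?_, ?_⟩
  · rcases hd n with h | h | h | h <;> simp_all <;> norm_num
  · have h1 : ∀ n : ℕ, (5 - d n) / 4 ^ (n+1) = (5:ℝ)/4^(n+1) - d n / 4^(n+1) := by
      intro n; ring
    simp_rw [h1]
    rw [Summable.tsum_sub (summable_digits (fun _ => 5) (fun _ => by norm_num [Set.mem_insert_iff]))
      (summable_digits d hd), tsum_const_digit]

/-- forced digit 0 -/
lemma unfold_low {x : ℝ} (hx : x ∈ cantorval) (h : x ≤ 5/12) : 4 * x ∈ cantorval := by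
  obtain ⟨δ, hδ, y, hy, rfl⟩ := unprepend hx
  have hy0 := mem_nonneg hy
  have : δ = 0 := by
    rcases hδ with h' | h' | h' | h' <;> simp_all <;> nlinarith
  subst this
  have : 4 * ((y + 0) / 4) = y := by ring
  rw [this]; exact hy

/-- forced digit 5 -/
lemma unfold_high {x : ℝ} (hx : x ∈ cantorval) (h : 5/4 ≤ x) : 4 * x - 5 ∈ cantorval := by
  obtain ⟨δ, hδ, y, hy, rfl⟩ := unprepend hx
  have hy5 := mem_le hy
  have : δ = 5 := by
    rcases hδ with h' | h' | h' | h' <;> simp_all <;> nlinarith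
  subst this
  have : 4 * ((y + 5) / 4) - 5 = y := by ring
  rw [this]; exact hy

/-- the fundamental gap (5/12, 1/2) -/
lemma gapG' {x : ℝ} (hx : x ∈ cantorval) : ¬ (5/12 < x ∧ x < 1/2) := by
  rintro ⟨h1, h2⟩
  obtain ⟨δ, hδ, y, hy, rfl⟩ := unprepend hx
  have hy0 := mem_nonneg hy
  have hy5 := mem_le hy
  rcases hδ with h' | h' | h' | h' <;> simp_all <;> nlinarith

/-- the fundamental gap (7/6, 5/4) -/
lemma gapH' {x : ℝ} (hx : x ∈ cantorval) : ¬ (7/6 < x ∧ x < 5/4) := by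
  rintro ⟨h1, h2⟩
  obtain ⟨δ, hδ, y, hy, rfl⟩ := unprepend hx
  have hy0 := mem_nonneg hy
  have hy5 := mem_le hy
  rcases hδ with h' | h' | h' | h' <;> simp_all <;> nlinarith




def DigSp : Type := ℕ → ({0, 2, 3, 5} : Set ℝ)

instance : TopologicalSpace DigSp := by unfold DigSp; infer_instance

instance : CompactSpace DigSp := by
  have hfin : ({0, 2, 3, 5} : Set ℝ).Finite := by
    apply Set.Finite.insert; apply Set.Finite.insert; apply Set.Finite.insert
    exact Set.finite_singleton _
  have : CompactSpace ({0, 2, 3, 5} : Set ℝ) := isCompact_iff_compactSpace.mp hfin.isCompact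
  unfold DigSp; infer_instance

noncomputable def Phi : DigSp → ℝ := fun σ => ∑' n : ℕ, (σ n : ℝ) / 4 ^ (n + 1)

lemma continuous_Phi : Continuous Phi := by
  apply continuous_tsum (u := fun n => 5 * (1/4:ℝ)^n)
  · intro i
    have : Continuous fun σ : DigSp => (σ i : ℝ) := by
      exact (continuous_subtype_val).comp (continuous_apply i)
    continuity
  · exact (summable_geometric_of_lt_one (by norm_num) (by norm_num)).mul_left 5
  · intro n σ
    have h1 : 0 ≤ (σ n : ℝ) := by
      rcases (σ n).2 with h | h | h | h <;> simp_all <;> norm_num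
    have h2 : (σ n : ℝ) ≤ 5 := by
      rcases (σ n).2 with h | h | h | h <;> simp_all <;> norm_num
    have h3 : (0:ℝ) < 4 ^ (n+1) := by positivity
    rw [Real.norm_eq_abs, abs_of_nonneg (by positivity)]
    rw [div_le_iff₀ h3]
    have h4 : (1/4:ℝ)^n * 4^(n+1) = 4 := by
      rw [div_pow, one_pow, pow_succ]; field_simp
    nlinarith

lemma cantorval_eq_range : cantorval = Set.range Phi := by
  ext x
  constructor
  · rintro ⟨d, hd, rfl⟩
    exact ⟨fun n => ⟨d n, hd n⟩, rfl⟩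
  · rintro ⟨σ, rfl⟩
    exact ⟨fun n => (σ n : ℝ), fun n => (σ n).2, rfl⟩

lemma isClosed_cantorval : IsClosed cantorval := by
  rw [cantorval_eq_range]
  exact (isCompact_range continuous_Phi).isClosed


lemma D0 : (0:ℝ) ∈ ({0, 2, 3, 5} : Set ℝ) := by norm_num
lemma D2 : (2:ℝ) ∈ ({0, 2, 3, 5} : Set ℝ) := by norm_num
lemma D3 : (3:ℝ) ∈ ({0, 2, 3, 5} : Set ℝ) := by norm_num
lemma D5 : (5:ℝ) ∈ ({0, 2, 3, 5} : Set ℝ) := by norm_num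

def Pset : Set ℝ := {w | w ∈ Set.Icc 0 (2/3) ∧ (w ∈ cantorval ∨ 2/3 - w ∈ cantorval)}
def Qset : Set ℝ := {x | x ∈ Set.Icc (2/3) 1 ∧ x ∈ cantorval}

lemma div4_mem {y : ℝ} (hy : y ∈ cantorval) : y/4 ∈ cantorval := by
  have := prepend hy D0; simpa using this

lemma hP1 {p : ℝ} (hp : p ∈ Pset) : p/4 ∈ Pset := by
  obtain ⟨⟨h0, h1⟩, hm⟩ := hp
  refine ⟨⟨by linarith, by linarith⟩, ?_⟩
  rcases hm with hm | hm
  · exact Or.inl (div4_mem hm)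
  · right
    have := prepend hm D2
    have he : ((2/3 - p) + 2)/4 = 2/3 - p/4 := by ring
    rwa [he] at this

lemma hP2 {q : ℝ} (hq : q ∈ Qset) : q/4 ∈ Pset := by
  obtain ⟨⟨h0, h1⟩, hm⟩ := hq
  exact ⟨⟨by linarith, by linarith⟩, Or.inl (div4_mem hm)⟩

lemma hP3 {p : ℝ} (hp : p ∈ Pset) : (5/3 - p)/4 ∈ Pset := by
  obtain ⟨⟨h0, h1⟩, hm⟩ := hp
  refine ⟨⟨by linarith, by linarith⟩, ?_⟩
  rcases hm with hm | hm
  · exact Or.inl (div4_mem (symm_mem hm))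
  · right
    have := div4_mem (symm_mem hm)
    have he : (5/3 - (2/3 - p))/4 = 2/3 - (5/3 - p)/4 := by ring
    rwa [he] at this

lemma hP4 {q : ℝ} (hq : q ∈ Qset) : 2/3 - q/4 ∈ Pset := by
  obtain ⟨⟨h0, h1⟩, hm⟩ := hq
  refine ⟨⟨by linarith, by linarith⟩, Or.inr ?_⟩
  have he : 2/3 - (2/3 - q/4) = q/4 := by ring
  rw [he]; exact div4_mem hm

lemma hP5 {p : ℝ} (hp : p ∈ Pset) : 2/3 - p/4 ∈ Pset := by
  obtain ⟨⟨h0, h1⟩, hm⟩ := hp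
  refine ⟨⟨by linarith, by linarith⟩, ?_⟩
  rcases hm with hm | hm
  · right
    have he : 2/3 - (2/3 - p/4) = p/4 := by ring
    rw [he]; exact div4_mem hm
  · left
    have := prepend hm D2
    have he : ((2/3 - p) + 2)/4 = 2/3 - p/4 := by ring
    rwa [he] at this

lemma hQ1 {q : ℝ} (hq : q ∈ Qset) : (q+2)/4 ∈ Qset := by
  obtain ⟨⟨h0, h1⟩, hm⟩ := hq
  exact ⟨⟨by linarith, by linarith⟩, prepend hm D2⟩

lemma hQ2 {p : ℝ} (hp : p ∈ Pset) : (p+3)/4 ∈ Qset := by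
  obtain ⟨⟨h0, h1⟩, hm⟩ := hp
  refine ⟨⟨by linarith, by linarith⟩, ?_⟩
  rcases hm with hm | hm
  · exact prepend hm D3
  · have h5 := symm_mem hm
    have := prepend h5 D2
    have he : ((5/3 - (2/3 - p)) + 2)/4 = (p+3)/4 := by ring
    rwa [he] at this

lemma hQ3 {q : ℝ} (hq : q ∈ Qset) : (q+3)/4 ∈ Qset := by
  obtain ⟨⟨h0, h1⟩, hm⟩ := hq
  exact ⟨⟨by linarith, by linarith⟩, prepend hm D3⟩

lemma approx : ∀ n : ℕ,
    (∀ w ∈ Set.Icc (0:ℝ) (2/3), ∃ p ∈ Pset, |p - w| ≤ (2/3) / 4^n) ∧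
    (∀ x ∈ Set.Icc (2/3:ℝ) 1, ∃ q ∈ Qset, |q - x| ≤ (2/3) / 4^n) := by
  intro n
  induction n with
  | zero =>
    constructor
    · intro w ⟨h0, h1⟩
      refine ⟨0, ⟨⟨le_refl _, by norm_num⟩, Or.inl zero_mem⟩, ?_⟩
      rw [abs_le]; constructor <;> simp <;> linarith
    · intro x ⟨h0, h1⟩
      refine ⟨2/3, ⟨⟨le_refl _, by norm_num⟩, twothirds_mem⟩, ?_⟩
      rw [abs_le]; constructor <;> simp <;> linarith
  | succ n ih =>
    obtain ⟨ihP, ihQ⟩ := ih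
    have hpow : (2/3 : ℝ) / 4^(n+1) = ((2/3) / 4^n) / 4 := by
      rw [pow_succ]; field_simp
    constructor
    · intro w ⟨h0, h1⟩
      rcases le_or_gt w (1/6) with hc | hc
      · obtain ⟨p', hp', he⟩ := ihP (4*w) ⟨by linarith, by linarith⟩
        refine ⟨p'/4, hP1 hp', ?_⟩
        rw [hpow]
        have : p'/4 - w = (p' - 4*w)/4 := by ring
        rw [this, abs_div]
        simp only [abs_of_nonneg (by norm_num : (0:ℝ) ≤ 4)]
        linarith [abs_nonneg (p' - 4*w), he]
      rcases le_or_gt w (1/4) with hc2 | hc2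
      · obtain ⟨q', hq', he⟩ := ihQ (4*w) ⟨by linarith, by linarith⟩
        refine ⟨q'/4, hP2 hq', ?_⟩
        rw [hpow]
        have : q'/4 - w = (q' - 4*w)/4 := by ring
        rw [this, abs_div]
        simp only [abs_of_nonneg (by norm_num : (0:ℝ) ≤ 4)]
        linarith [he]
      rcases le_or_gt w (5/12) with hc3 | hc3
      · obtain ⟨p', hp', he⟩ := ihP (5/3 - 4*w) ⟨by linarith, by linarith⟩
        refine ⟨(5/3 - p')/4, hP3 hp', ?_⟩
        rw [hpow]
        have : (5/3 - p')/4 - w = -((p' - (5/3 - 4*w))/4) := by ring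
        rw [this, abs_neg, abs_div]
        simp only [abs_of_nonneg (by norm_num : (0:ℝ) ≤ 4)]
        linarith [he]
      rcases le_or_gt w (1/2) with hc4 | hc4
      · obtain ⟨q', hq', he⟩ := ihQ (8/3 - 4*w) ⟨by linarith, by linarith⟩
        refine ⟨2/3 - q'/4, hP4 hq', ?_⟩
        rw [hpow]
        have : (2/3 - q'/4) - w = -((q' - (8/3 - 4*w))/4) := by ring
        rw [this, abs_neg, abs_div]
        simp only [abs_of_nonneg (by norm_num : (0:ℝ) ≤ 4)]
        linarith [he]
      · obtain ⟨p', hp', he⟩ := ihP (8/3 - 4*w) ⟨by linarith, by linarith⟩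
        refine ⟨2/3 - p'/4, hP5 hp', ?_⟩
        rw [hpow]
        have : (2/3 - p'/4) - w = -((p' - (8/3 - 4*w))/4) := by ring
        rw [this, abs_neg, abs_div]
        simp only [abs_of_nonneg (by norm_num : (0:ℝ) ≤ 4)]
        linarith [he]
    · intro x ⟨h0, h1⟩
      rcases le_or_gt x (3/4) with hc | hc
      · obtain ⟨q', hq', he⟩ := ihQ (4*x - 2) ⟨by linarith, by linarith⟩
        refine ⟨(q'+2)/4, hQ1 hq', ?_⟩
        rw [hpow]
        have : (q'+2)/4 - x = (q' - (4*x-2))/4 := by ring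
        rw [this, abs_div]
        simp only [abs_of_nonneg (by norm_num : (0:ℝ) ≤ 4)]
        linarith [he]
      rcases le_or_gt x (11/12) with hc2 | hc2
      · obtain ⟨p', hp', he⟩ := ihP (4*x - 3) ⟨by linarith, by linarith⟩
        refine ⟨(p'+3)/4, hQ2 hp', ?_⟩
        rw [hpow]
        have : (p'+3)/4 - x = (p' - (4*x-3))/4 := by ring
        rw [this, abs_div]
        simp only [abs_of_nonneg (by norm_num : (0:ℝ) ≤ 4)]
        linarith [he]
      · obtain ⟨q', hq', he⟩ := ihQ (4*x - 3) ⟨by linarith, by linarith⟩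
        refine ⟨(q'+3)/4, hQ3 hq', ?_⟩
        rw [hpow]
        have : (q'+3)/4 - x = (q' - (4*x-3))/4 := by ring
        rw [this, abs_div]
        simp only [abs_of_nonneg (by norm_num : (0:ℝ) ≤ 4)]
        linarith [he]

lemma isClosed_Qset : IsClosed Qset := by
  have : Qset = Set.Icc (2/3) 1 ∩ cantorval := rfl
  rw [this]
  exact isClosed_Icc.inter isClosed_cantorval

lemma Icc_subset_cantorval : Set.Icc (2/3 : ℝ) 1 ⊆ cantorval := by
  intro x hx
  have hxQ : x ∈ Qset := by
    rw [← isClosed_Qset.closure_eq]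
    rw [Metric.mem_closure_iff]
    intro ε hε
    obtain ⟨n, hn⟩ := pow_unbounded_of_one_lt ((2/3)/ε) (by norm_num : (1:ℝ) < 4)
    obtain ⟨q, hq, he⟩ := (approx n).2 x hx
    refine ⟨q, hq, ?_⟩
    rw [Real.dist_eq, abs_sub_comm]
    calc |q - x| ≤ (2/3)/4^n := he
      _ < ε := by
        rw [div_lt_iff₀ (by positivity)]
        rw [div_lt_iff₀ hε] at hn
        linarith
  exact hxQ.2


def Gap (a b : ℝ) : Prop := ∀ x ∈ cantorval, ¬ (a < x ∧ x < b)
def Pad (a b : ℝ) : Prop := Set.Ioo a b ⊆ cantorval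

lemma gapG : Gap (5/12) (1/2) := fun _ hx => gapG' hx
lemma gapH : Gap (7/6) (5/4) := fun _ hx => gapH' hx

lemma gap_div4 {a b : ℝ} (hb : b ≤ 5/3) (h : Gap a b) : Gap (a/4) (b/4) := by
  rintro x hx ⟨h1, h2⟩
  have hx' : x ≤ 5/12 := by nlinarith
  exact h (4*x) (unfold_low hx hx') ⟨by linarith, by linarith⟩

lemma gap_congr {a b a' b' : ℝ} (h : Gap a b) (ha : a = a') (hb : b = b') : Gap a' b' :=
  ha ▸ hb ▸ h
lemma pad_congr {a b a' b' : ℝ} (h : Pad a b) (ha : a = a') (hb : b = b') : Pad a' b' :=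
  ha ▸ hb ▸ h

lemma gapG4 : Gap (5/48) (1/8) :=
  gap_congr (gap_div4 (by norm_num) gapG) (by norm_num) (by norm_num)
lemma gapG16 : Gap (5/192) (1/32) :=
  gap_congr (gap_div4 (by norm_num) gapG4) (by norm_num) (by norm_num)
lemma gapH4 : Gap (7/24) (5/16) :=
  gap_congr (gap_div4 (by norm_num) gapH) (by norm_num) (by norm_num)
lemma gapH16 : Gap (7/96) (5/64) :=
  gap_congr (gap_div4 (by norm_num) gapH4) (by norm_num) (by norm_num)

lemma padB : Pad (2/3) 1 := fun x hx => Icc_subset_cantorval ⟨hx.1.le, hx.2.le⟩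

lemma pad_pre {a b : ℝ} (h : Pad a b) {δ : ℝ} (hδ : δ ∈ ({0, 2, 3, 5} : Set ℝ)) :
    Pad ((a+δ)/4) ((b+δ)/4) := by
  rintro x ⟨h1, h2⟩
  have hy : 4*x - δ ∈ cantorval := h ⟨by linarith, by linarith⟩
  have := prepend hy hδ
  have he : ((4*x - δ) + δ)/4 = x := by ring
  rwa [he] at this

lemma padP16 : Pad (1/6) (1/4) :=
  pad_congr (pad_pre padB D0) (by norm_num) (by norm_num)
lemma padP24 : Pad (1/24) (1/16) :=
  pad_congr (pad_pre padP16 D0) (by norm_num) (by norm_num)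
lemma padP1324 : Pad (13/24) (9/16) :=
  pad_congr (pad_pre padP16 D2) (by norm_num) (by norm_num)
lemma padP1396 : Pad (13/96) (9/64) :=
  pad_congr (pad_pre padP1324 D0) (by norm_num) (by norm_num)
lemma padP1712 : Pad (17/12) (3/2) :=
  pad_congr (pad_pre padB D5) (by norm_num) (by norm_num)
lemma padP1748 : Pad (17/48) (3/8) :=
  pad_congr (pad_pre padP1712 D0) (by norm_num) (by norm_num)
lemma padP17192 : Pad (17/192) (3/32) :=
  pad_congr (pad_pre padP1748 D0) (by norm_num) (by norm_num)
lemma padP5348 : Pad (53/48) (9/8) :=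
  pad_congr (pad_pre padP1712 D3) (by norm_num) (by norm_num)
lemma padP7748 : Pad (77/48) (13/8) :=
  pad_congr (pad_pre padP1712 D5) (by norm_num) (by norm_num)
lemma padP133 : Pad (133/96) (89/64) :=
  pad_congr (pad_pre padP1324 D5) (by norm_num) (by norm_num)
lemma padP293 : Pad (293/192) (49/32) :=
  pad_congr (pad_pre padP5348 D5) (by norm_num) (by norm_num)

def Zset : Set ℝ := Set.Icc 0 (5/3) \ interior cantorval

lemma pad_mem_interior {a b x : ℝ} (h : Pad a b) (h1 : a < x) (h2 : x < b) :
    x ∈ interior cantorval :=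
  interior_maximal h isOpen_Ioo ⟨h1, h2⟩

lemma interior_bounds {x : ℝ} (hx : x ∈ interior cantorval) : 0 < x ∧ x < 5/3 := by
  obtain ⟨ε, hε, hball⟩ := Metric.isOpen_iff.mp isOpen_interior x hx
  have h1 : x - ε/2 ∈ cantorval := by
    apply interior_subset; apply hball
    rw [Metric.mem_ball, Real.dist_eq]
    rw [abs_of_nonpos (by linarith)]
    linarith
  have h2 : x + ε/2 ∈ cantorval := by
    apply interior_subset; apply hball
    rw [Metric.mem_ball, Real.dist_eq]
    rw [abs_of_nonneg (by linarith)]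
    linarith
  have := mem_nonneg h1
  have := mem_le h2
  constructor <;> linarith

lemma Z_of_gap {a b x : ℝ} (hg : Gap a b) (h0 : 0 ≤ a) (h5 : b ≤ 5/3)
    (h1 : a < x) (h2 : x < b) : x ∈ Zset := by
  refine ⟨⟨by linarith, by linarith⟩, fun hi => hg x (interior_subset hi) ⟨h1, h2⟩⟩

lemma zero_mem_Z : (0:ℝ) ∈ Zset := by
  refine ⟨⟨le_refl _, by norm_num⟩, fun hi => ?_⟩
  exact absurd (interior_bounds hi).1 (lt_irrefl 0)

lemma interior_div4 {t : ℝ} (ht : t ∈ interior cantorval) : t/4 ∈ interior cantorval := by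
  have hV : IsOpen ((fun y : ℝ => 4*y) ⁻¹' (interior cantorval)) :=
    isOpen_interior.preimage (by continuity)
  have hsub : (fun y : ℝ => 4*y) ⁻¹' (interior cantorval) ⊆ cantorval := by
    intro y hy
    have h1 : 4*y ∈ cantorval := interior_subset hy
    have := prepend h1 D0
    have he : ((4*y) + 0)/4 = y := by ring
    rwa [he] at this
  refine interior_maximal hsub hV ?_
  simp only [Set.mem_preimage]
  have : 4 * (t/4) = t := by ring
  rwa [this]

lemma interior_top {t : ℝ} (ht : t ∈ interior cantorval) : (t+5)/4 ∈ interior cantorval := by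
  have hV : IsOpen ((fun y : ℝ => 4*y - 5) ⁻¹' (interior cantorval)) :=
    isOpen_interior.preimage (by continuity)
  have hsub : (fun y : ℝ => 4*y - 5) ⁻¹' (interior cantorval) ⊆ cantorval := by
    intro y hy
    have h1 : 4*y - 5 ∈ cantorval := interior_subset hy
    have := prepend h1 D5
    have he : ((4*y - 5) + 5)/4 = y := by ring
    rwa [he] at this
  refine interior_maximal hsub hV ?_
  simp only [Set.mem_preimage]
  have : 4 * ((t+5)/4) - 5 = t := by ring
  rwa [this]

lemma not_interior_div4 {x : ℝ} (hx : x ∈ Set.Icc (0:ℝ) (5/3))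
    (hni : x ∉ interior cantorval) : x/4 ∉ interior cantorval := by
  intro hi
  rcases eq_or_lt_of_le hx.2 with he | hlt
  · -- x = 5/3, x/4 = 5/12
    rw [he] at hi
    obtain ⟨ε, hε, hball⟩ := Metric.isOpen_iff.mp isOpen_interior _ hi
    have hp : (5:ℝ)/3/4 + min ε (1/12) / 2 ∈ cantorval := by
      apply interior_subset; apply hball
      rw [Metric.mem_ball, Real.dist_eq]
      have hm : 0 < min ε (1/12) := lt_min hε (by norm_num)
      rw [abs_of_nonneg (by linarith)]
      have := min_le_left ε (1/12)
      linarith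
    apply gapG _ hp
    have hm : 0 < min ε (1/12) := lt_min hε (by norm_num)
    have := min_le_right ε (1/12)
    constructor <;> [norm_num; skip] <;> linarith
  · apply hni
    have hV : IsOpen ((fun y : ℝ => y/4) ⁻¹' (interior cantorval) ∩ Set.Iio (5/3)) :=
      (isOpen_interior.preimage (by continuity)).inter isOpen_Iio
    have hsub : (fun y : ℝ => y/4) ⁻¹' (interior cantorval) ∩ Set.Iio (5/3) ⊆ cantorval := by
      rintro y ⟨hy1, hy2⟩
      have h1 : y/4 ∈ cantorval := interior_subset hy1
      have h2 : y/4 ≤ 5/12 := by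
        simp only [Set.mem_Iio] at hy2; linarith
      have := unfold_low h1 h2
      have he : 4 * (y/4) = y := by ring
      rwa [he] at this
    exact interior_maximal hsub hV ⟨hi, hlt⟩

lemma not_interior_top {x : ℝ} (hx : x ∈ Set.Icc (0:ℝ) (5/3))
    (hni : x ∉ interior cantorval) : (x+5)/4 ∉ interior cantorval := by
  intro hi
  rcases eq_or_lt_of_le hx.1 with he | hlt
  · -- x = 0, (x+5)/4 = 5/4
    rw [← he] at hi
    obtain ⟨ε, hε, hball⟩ := Metric.isOpen_iff.mp isOpen_interior _ hi
    have hp : ((0:ℝ)+5)/4 - min ε (1/12) / 2 ∈ cantorval := by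
      apply interior_subset; apply hball
      rw [Metric.mem_ball, Real.dist_eq]
      have hm : 0 < min ε (1/12) := lt_min hε (by norm_num)
      rw [abs_of_nonpos (by linarith)]
      have := min_le_left ε (1/12)
      linarith
    apply gapH _ hp
    have hm : 0 < min ε (1/12) := lt_min hε (by norm_num)
    have := min_le_right ε (1/12)
    constructor <;> [skip; norm_num] <;> linarith
  · apply hni
    have hV : IsOpen ((fun y : ℝ => (y+5)/4) ⁻¹' (interior cantorval) ∩ Set.Ioi 0) :=
      (isOpen_interior.preimage (by continuity)).inter isOpen_Ioi
    have hsub : (fun y : ℝ => (y+5)/4) ⁻¹' (interior cantorval) ∩ Set.Ioi 0 ⊆ cantorval := by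
      rintro y ⟨hy1, hy2⟩
      have h1 : (y+5)/4 ∈ cantorval := interior_subset hy1
      have h2 : 5/4 ≤ (y+5)/4 := by
        simp only [Set.mem_Ioi] at hy2; linarith
      have := unfold_high h1 h2
      have he : 4 * ((y+5)/4) - 5 = y := by ring
      rwa [he] at this
    exact interior_maximal hsub hV ⟨hi, hlt⟩

lemma Z_div4 {x : ℝ} (hx : x ∈ Zset) : x/4 ∈ Zset := by
  obtain ⟨⟨h0, h5⟩, hni⟩ := hx
  exact ⟨⟨by linarith, by linarith⟩, not_interior_div4 ⟨h0, h5⟩ hni⟩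

lemma Z_top {x : ℝ} (hx : x ∈ Zset) : (x+5)/4 ∈ Zset := by
  obtain ⟨⟨h0, h5⟩, hni⟩ := hx
  exact ⟨⟨by linarith, by linarith⟩, not_interior_top ⟨h0, h5⟩ hni⟩


def Qs (α : ℝ) : Prop := ∃ x ∈ Zset,
  (x - α < 0 ∨ x - α ∈ interior cantorval) ∧
  (x + α ∈ interior cantorval ∨ 5/3 < x + α) ∧
  (0 ≤ x - α ∨ x + α ≤ 5/3)

def Qw (α : ℝ) : Prop := ∃ x ∈ Zset,
  (x - α < 0 ∨ x - α ∈ interior cantorval) ∧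
  (x + α ∈ interior cantorval ∨ 5/3 < x + α)

lemma Qs.toQw {α : ℝ} (h : Qs α) : Qw α := by
  obtain ⟨x, hx, h1, h2, _⟩ := h; exact ⟨x, hx, h1, h2⟩

/-- left-escape window: x in a gap, x < α, x + α in a pad -/
lemma qs_left {g1 g2 p q α : ℝ} (hg12 : g1 < g2) (hpq : p < q)
    (hgap : Gap g1 g2) (hg0 : 0 ≤ g1) (hg5 : g2 ≤ 5/3) (hpad : Pad p q) (hq5 : q ≤ 5/3)
    (h1 : g1 < α) (h2 : p < 2*α) (h3 : p - g2 < α) (h4 : α < q - g1) : Qs α := by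
  set L := max g1 (p - α) with hL
  set U := min g2 (min (q - α) α) with hU
  have hLU : L < U :=
    max_lt (lt_min hg12 (lt_min (by linarith) h1))
      (lt_min (by linarith) (lt_min (by linarith) (by linarith)))
  set x := (L + U)/2 with hx
  have hxL : L < x := by rw [hx]; linarith
  have hxU : x < U := by rw [hx]; linarith
  have hg1x : g1 < x := lt_of_le_of_lt (le_max_left _ _) hxL
  have hxg2 : x < g2 := lt_of_lt_of_le hxU (min_le_left _ _)
  have hxα : x < α := lt_of_lt_of_le hxU ((min_le_right _ _).trans (min_le_right _ _))
  have hpx : p - α < x := lt_of_le_of_lt (le_max_right _ _) hxL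
  have hxq : x < q - α := lt_of_lt_of_le hxU ((min_le_right _ _).trans (min_le_left _ _))
  refine ⟨x, Z_of_gap hgap hg0 hg5 hg1x hxg2, Or.inl (by linarith),
    Or.inl (pad_mem_interior hpad (by linarith) (by linarith)), Or.inr (by linarith)⟩

/-- both-pads window: x in a gap, x - α in pad1, x + α in pad2 -/
lemma qs_mid {g1 g2 p1 q1 p2 q2 α : ℝ} (hg12 : g1 < g2) (h11 : p1 < q1) (h22 : p2 < q2)
    (hgap : Gap g1 g2) (hg0 : 0 ≤ g1) (hg5 : g2 ≤ 5/3)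
    (hpad1 : Pad p1 q1) (hpad2 : Pad p2 q2) (hp10 : 0 ≤ p1) (hq25 : q2 ≤ 5/3)
    (h1 : g1 - q1 < α) (h2 : p2 - g2 < α) (h3 : p2 - q1 < 2*α)
    (h4 : α < q2 - g1) (h5 : α < g2 - p1) (h6 : 2*α < q2 - p1) : Qs α := by
  set L := max g1 (max (p1 + α) (p2 - α)) with hL
  set U := min g2 (min (q1 + α) (q2 - α)) with hU
  have hLU : L < U :=
    max_lt (lt_min hg12 (lt_min (by linarith) (by linarith)))
      (max_lt (lt_min (by linarith) (lt_min (by linarith) (by linarith)))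
        (lt_min (by linarith) (lt_min (by linarith) (by linarith))))
  set x := (L + U)/2 with hx
  have hxL : L < x := by rw [hx]; linarith
  have hxU : x < U := by rw [hx]; linarith
  have hg1x : g1 < x := lt_of_le_of_lt (le_max_left _ _) hxL
  have hxg2 : x < g2 := lt_of_lt_of_le hxU (min_le_left _ _)
  have hp1x : p1 + α < x := lt_of_le_of_lt ((le_max_left _ _).trans (le_max_right _ _)) hxL
  have hp2x : p2 - α < x := lt_of_le_of_lt ((le_max_right _ _).trans (le_max_right _ _)) hxL
  have hxq1 : x < q1 + α := lt_of_lt_of_le hxU ((min_le_right _ _).trans (min_le_left _ _))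
  have hxq2 : x < q2 - α := lt_of_lt_of_le hxU ((min_le_right _ _).trans (min_le_right _ _))
  refine ⟨x, Z_of_gap hgap hg0 hg5 hg1x hxg2,
    Or.inr (pad_mem_interior hpad1 (by linarith) (by linarith)),
    Or.inl (pad_mem_interior hpad2 (by linarith) (by linarith)), Or.inl (by linarith)⟩

lemma qw_esc {α : ℝ} (h : 7/6 < α) : Qw α := by
  set L := max (5/12 : ℝ) (5/3 - α) with hL
  have hL2 : L < 1/2 := max_lt (by norm_num) (by linarith)
  set x := (L + 1/2)/2 with hx
  have hxL : L < x := by rw [hx]; linarith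
  have hxU : x < 1/2 := by rw [hx]; linarith
  have h1 : 5/12 < x := lt_of_le_of_lt (le_max_left _ _) hxL
  have h2 : 5/3 - α < x := lt_of_le_of_lt (le_max_right _ _) hxL
  exact ⟨x, Z_of_gap gapG (by norm_num) (by norm_num) h1 hxU,
    Or.inl (by linarith), Or.inr (by linarith)⟩

lemma qs_base {α : ℝ} (hlo : 5/48 < α) (hhi : α ≤ 5/12) : Qs α := by
  rcases lt_or_ge α (17/96) with hc | hc
  · exact qs_left (by norm_num) (by norm_num) gapH16 (by norm_num) (by norm_num)
      padP16 (by norm_num) (by linarith) (by linarith) (by linarith) (by linarith)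
  rcases lt_or_ge α (43/192) with hc2 | hc2
  · exact qs_left (by norm_num) (by norm_num) gapG16 (by norm_num) (by norm_num)
      padP16 (by norm_num) (by linarith) (by linarith) (by linarith) (by linarith)
  rcases lt_or_ge α (1/3) with hc3 | hc3
  · exact qs_mid (by norm_num) (by norm_num) (by norm_num) gapG (by norm_num) (by norm_num)
      padP16 padB (by norm_num) (by norm_num)
      (by linarith) (by linarith) (by linarith) (by linarith) (by linarith) (by linarith)
  rcases lt_or_ge α (35/96) with hc4 | hc4
  · exact qs_mid (by norm_num) (by norm_num) (by norm_num) gapG (by norm_num) (by norm_num)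
      padP1396 padB (by norm_num) (by norm_num)
      (by linarith) (by linarith) (by linarith) (by linarith) (by linarith) (by linarith)
  rcases lt_or_ge α (79/192) with hc5 | hc5
  · exact qs_mid (by norm_num) (by norm_num) (by norm_num) gapG (by norm_num) (by norm_num)
      padP17192 padB (by norm_num) (by norm_num)
      (by linarith) (by linarith) (by linarith) (by linarith) (by linarith) (by linarith)
  · exact qs_mid (by norm_num) (by norm_num) (by norm_num) gapG (by norm_num) (by norm_num)
      padP24 padB (by norm_num) (by norm_num)
      (by linarith) (by linarith) (by linarith) (by linarith) (by linarith) (by linarith)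

lemma qw_base {α : ℝ} (hlo : 5/12 < α) (hhi : α ≤ 5/3) : Qw α := by
  rcases lt_or_ge α (7/12) with hc | hc
  · exact (qs_left (by norm_num) (by norm_num) gapG (by norm_num) (by norm_num)
      padB (by norm_num) (by linarith) (by linarith) (by linarith) (by linarith)).toQw
  rcases lt_or_ge α (43/48) with hc2 | hc2
  · exact (qs_left (by norm_num) (by norm_num) gapG4 (by norm_num) (by norm_num)
      padB (by norm_num) (by linarith) (by linarith) (by linarith) (by linarith)).toQw
  rcases lt_or_ge α (187/192) with hc3 | hc3
  · exact (qs_left (by norm_num) (by norm_num) gapG (by norm_num) (by norm_num)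
      padP133 (by norm_num) (by linarith) (by linarith) (by linarith) (by linarith)).toQw
  rcases lt_or_ge α (13/12) with hc4 | hc4
  · exact (qs_left (by norm_num) (by norm_num) gapG (by norm_num) (by norm_num)
      padP1712 (by norm_num) (by linarith) (by linarith) (by linarith) (by linarith)).toQw
  rcases lt_or_ge α (107/96) with hc5 | hc5
  · exact (qs_left (by norm_num) (by norm_num) gapG (by norm_num) (by norm_num)
      padP293 (by norm_num) (by linarith) (by linarith) (by linarith) (by linarith)).toQw
  rcases lt_or_ge α (29/24) with hc6 | hc6
  · exact (qs_left (by norm_num) (by norm_num) gapG (by norm_num) (by norm_num)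
      padP7748 (by norm_num) (by linarith) (by linarith) (by linarith) (by linarith)).toQw
  · exact qw_esc (by linarith)

lemma qs_quarter {α : ℝ} (h0 : 0 < α) (h12 : α ≤ 5/12) (h : Qs (4*α)) : Qs α := by
  obtain ⟨x, hxZ, hL, hR, hNE⟩ := h
  rcases hR with hR | hR
  · refine ⟨x/4, Z_div4 hxZ, ?_, Or.inl ?_, Or.inr ?_⟩
    · rcases hL with hL | hL
      · left; linarith
      · right
        have he : x/4 - α = (x - 4*α)/4 := by ring
        rw [he]; exact interior_div4 hL
    · have he : x/4 + α = (x + 4*α)/4 := by ring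
      rw [he]; exact interior_div4 hR
    · have := (interior_bounds hR).2
      linarith
  · have hL' : x - 4*α ∈ interior cantorval := by
      rcases hNE with hNE | hNE
      · rcases hL with hL | hL
        · linarith
        · exact hL
      · linarith
    refine ⟨(x+5)/4, Z_top hxZ, Or.inr ?_, Or.inr ?_, Or.inl ?_⟩
    · have he : (x+5)/4 - α = ((x - 4*α) + 5)/4 := by ring
      rw [he]; exact interior_top hL'
    · linarith
    · have := (interior_bounds hL').1
      linarith

lemma qs_small : ∀ n : ℕ, ∀ α : ℝ, 0 < α → α ≤ 5/12 → 5/48 < 4^n * α → Qs α := by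
  intro n
  induction n with
  | zero =>
    intro α h0 h12 h48
    exact qs_base (by simpa using h48) h12
  | succ n ih =>
    intro α h0 h12 h48
    rcases lt_or_ge (5/48) α with hc | hc
    · exact qs_base hc h12
    · apply qs_quarter h0 h12
      apply ih (4*α) (by linarith) (by linarith)
      have he : 4^n * (4*α) = 4^(n+1) * α := by ring
      rw [he]; exact h48

lemma qw_all {α : ℝ} (h0 : 0 < α) (h53 : α ≤ 5/3) : Qw α := by
  rcases le_or_gt α (5/12) with hc | hc
  · obtain ⟨n, hn⟩ := pow_unbounded_of_one_lt ((5/48)/α) (by norm_num : (1:ℝ) < 4)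
    have h48 : 5/48 < 4^n * α := by
      rw [div_lt_iff₀ h0] at hn
      linarith
    exact (qs_small n α h0 hc h48).toQw
  · exact qw_base hc h53


end CV

open CV in
theorem stmt15 :
    centerOfDistances (Set.Icc 0 (5 / 3) \ interior cantorval) = {0} := by
  ext α
  simp only [Set.mem_singleton_iff]
  constructor
  · rintro ⟨hα0, hα⟩
    by_contra hne
    have h0 : 0 < α := lt_of_le_of_ne hα0 (Ne.symm hne)
    obtain ⟨y, hy, hyd⟩ := hα 0 zero_mem_Z
    have hy0 : 0 ≤ y := hy.1.1
    have hyα : y = α := by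
      rw [zero_sub, abs_neg, abs_of_nonneg hy0] at hyd
      exact hyd
    have hα53 : α ≤ 5/3 := hyα ▸ hy.1.2
    obtain ⟨x, hxZ, hL, hR⟩ := qw_all h0 hα53
    obtain ⟨y', hy', hd⟩ := hα x hxZ
    rcases (abs_eq (le_of_lt h0)).mp hd with h | h
    · have hy'e : y' = x - α := by linarith
      rcases hL with hL | hL
      · have : (0:ℝ) ≤ y' := hy'.1.1
        linarith [hy'e ▸ this]
      · exact hy'.2 (hy'e ▸ hL)
    · have hy'e : y' = x + α := by linarith
      rcases hR with hR | hR
      · exact hy'.2 (hy'e ▸ hR)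
      · have : y' ≤ 5/3 := hy'.1.2
        rw [hy'e] at this
        linarith
  · rintro rfl
    exact ⟨le_refl 0, fun x hx => ⟨x, hx, by simp⟩⟩
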